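/- Let F be a twisting cocycle for the Hopf algebra H and let A be a left H-module algebra with action map ρ: H → End_k(A). For X ∈ End_k(A) set φ⁻¹(X) := Σ ρ(F₁)∘X∘ρ(γ(F₂ζ)), and define the twisted action of End_k(A) on A by X∗a := Σ ((F₁.X))(F₂•a), where h.X := Σ ρ(h⁽¹⁾)∘X∘ρ(γ(h⁽²⁾)). Then for all X ∈ End_k(A) and a ∈ A: φ⁻¹(X)∗a = X(a). -/

import Mathlib

open TensorProduct
set_option maxRecDepth 4000

noncomputable section

variable (k : Type*) [Field k] (H : Type*) [Ring H] [HopfAlgebra k H]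

/-- The comultiplication of `H` as a linear map. -/
noncomputable def comulL : H →ₗ[k] H ⊗[k] H := Coalgebra.comul

/-- The counit of `H` as a linear map. -/
noncomputable def counitL : H →ₗ[k] k := Coalgebra.counit

/-- The antipode of `H`. -/
noncomputable def anti : H →ₗ[k] H := HopfAlgebra.antipode (R := k)

/-- `F` together with its inverse `Finv` is a twisting (Drinfeld) cocycle:
`F` is invertible, `(Δ⊗id)(F)·(F⊗1) = (id⊗Δ)(F)·(1⊗F)` and `(ε⊗id)(F) = 1 = (id⊗ε)(F)`. -/
def IsCocycle (F Finv : H ⊗[k] H) : Prop :=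
  F * Finv = 1 ∧ Finv * F = 1 ∧
  (TensorProduct.assoc k H H H) ((TensorProduct.map (comulL k H) LinearMap.id F) * (F ⊗ₜ 1))
    = (TensorProduct.map LinearMap.id (comulL k H) F) * ((1 : H) ⊗ₜ F) ∧
  (TensorProduct.lid k H) (TensorProduct.map (counitL k H) LinearMap.id F) = 1 ∧
  (TensorProduct.rid k H) (TensorProduct.map LinearMap.id (counitL k H) F) = 1

/-- `ϑ = Σ γ(F₁)F₂`. -/
noncomputable def theta (F : H ⊗[k] H) : H :=
  LinearMap.mul' k H (TensorProduct.map (anti k H) LinearMap.id F)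

/-- `ζ = Σ F̄₂ γ⁻¹(F̄₁)`, where `γinv` is the inverse of the antipode and `Finv = Σ F̄₁⊗F̄₂`. -/
noncomputable def zeta (γinv : H →ₗ[k] H) (Finv : H ⊗[k] H) : H :=
  LinearMap.mul' k H (TensorProduct.map LinearMap.id γinv ((TensorProduct.comm k H H) Finv))

/-- `R` (with inverse `Rinv`) is a triangular structure: `R` is invertible,
`R Δ(h) = Δᵒᵖ(h) R`, the two hexagon identities `(Δ⊗id)(R) = R₁₃R₂₃`,
`(id⊗Δ)(R) = R₁₃R₁₂` hold, and `R₂₁ R = 1`. -/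
def IsTriangular (R Rinv : H ⊗[k] H) : Prop :=
  R * Rinv = 1 ∧ Rinv * R = 1 ∧
  (∀ h : H, R * comulL k H h = (TensorProduct.comm k H H) (comulL k H h) * R) ∧
  (TensorProduct.assoc k H H H) (TensorProduct.map (comulL k H) LinearMap.id R)
    = (TensorProduct.map LinearMap.id (TensorProduct.mk k H H 1) R) * ((1 : H) ⊗ₜ R) ∧
  (TensorProduct.map LinearMap.id (comulL k H) R)
    = (TensorProduct.map LinearMap.id (TensorProduct.mk k H H 1) R) *
      ((TensorProduct.assoc k H H H) (R ⊗ₜ (1 : H))) ∧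
  ((TensorProduct.comm k H H) R) * R = 1

/-- `bcomp U V x y = (U x) ∘ₗ (V y)`, bilinearly in `x, y`. -/
noncomputable def bcomp {A B C : Type*} [AddCommMonoid A] [AddCommMonoid B] [AddCommMonoid C]
    [Module k A] [Module k B] [Module k C]
    (U : H →ₗ[k] B →ₗ[k] C) (V : H →ₗ[k] A →ₗ[k] B) : H →ₗ[k] H →ₗ[k] (A →ₗ[k] C) :=
  ((((LinearMap.llcomp k A B C) ∘ₗ U).flip) ∘ₗ V).flip

/-- Given an action `α` of `H` on `M`, the induced action of `H ⊗ H` on `M ⊗ M`: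
`pairAct α (x ⊗ y) (a ⊗ b) = (α x a) ⊗ (α y b)`. -/
noncomputable def pairAct {M : Type*} [AddCommMonoid M] [Module k M]
    (α : H →ₗ[k] M →ₗ[k] M) : H ⊗[k] H →ₗ[k] (M ⊗[k] M →ₗ[k] M ⊗[k] M) :=
  (TensorProduct.homTensorHomMap (RingHom.id k) M M M M) ∘ₗ (TensorProduct.map α α)

/-- `sandwich α β (x ⊗ y) a = α x * a * β y`. -/
noncomputable def sandwich {E : Type*} [Ring E] [Algebra k E]
    (α β : H →ₗ[k] E) : H ⊗[k] H →ₗ[k] E →ₗ[k] E :=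
  TensorProduct.lift (bcomp k H ((LinearMap.mul k E) ∘ₗ α) ((LinearMap.mul k E).flip ∘ₗ β))

/-- The adjoint action associated with `ρ : H →ₗ E`:
`adAct ρ h a = Σ ρ(h⁽¹⁾) a ρ(γ(h⁽²⁾))`. -/
noncomputable def adAct {E : Type*} [Ring E] [Algebra k E]
    (ρ : H →ₗ[k] E) : H →ₗ[k] E →ₗ[k] E :=
  (sandwich k H ρ (ρ ∘ₗ anti k H)) ∘ₗ comulL k H

/-- The twisted comultiplication `Δ̃(h) = F⁻¹ Δ(h) F`. -/
noncomputable def comulTw (F Finv : H ⊗[k] H) : H →ₗ[k] H ⊗[k] H :=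
  (LinearMap.mulRight k F) ∘ₗ (LinearMap.mulLeft k Finv) ∘ₗ comulL k H

/-- The twisted antipode `γ̃(h) = ϑ⁻¹ γ(h) ϑ`. -/
noncomputable def antiTw (ϑ ϑinv : H) : H →ₗ[k] H :=
  (LinearMap.mulRight k ϑ) ∘ₗ (LinearMap.mulLeft k ϑinv) ∘ₗ anti k H

variable (A : Type*) [Ring A] [Algebra k A]

/-- `act` makes `A` a left `H`-module algebra:
`act` is a representation of `H`, `h•(ab) = Σ (h⁽¹⁾•a)(h⁽²⁾•b)` and `h•1 = ε(h)1`. -/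
def IsModAlg (act : H →ₗ[k] Module.End k A) : Prop :=
  act 1 = 1 ∧ (∀ g h : H, act (g * h) = act g * act h) ∧
  (∀ (h : H) (a b : A),
    act h (a * b) = LinearMap.mul' k A ((pairAct k H act) (comulL k H h) (a ⊗ₜ b))) ∧
  (∀ h : H, act h 1 = (counitL k H h) • (1 : A))

/-- The adjoint-type action of `H` on `End_k(A)`: `h.X = Σ ρ(h⁽¹⁾) ∘ X ∘ ρ(γ(h⁽²⁾))`. -/
noncomputable def dotAct (act : H →ₗ[k] Module.End k A) :
    H →ₗ[k] Module.End k A →ₗ[k] Module.End k A :=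
  (sandwich k H (E := Module.End k A) act (act ∘ₗ anti k H)) ∘ₗ comulL k H


noncomputable def conv (f g : H ⊗[k] H →ₗ[k] H) : H ⊗[k] H →ₗ[k] H :=
  LinearMap.mul' k H ∘ₗ TensorProduct.map f g ∘ₗ
    (TensorProduct.tensorTensorTensorComm k H H H H).toLinearMap ∘ₗ
    TensorProduct.map (Coalgebra.comul (R := k)) (Coalgebra.comul (R := k))

lemma conv_apply (f g : H ⊗[k] H →ₗ[k] H) (a b : H) :
    conv k H f g (a ⊗ₜ b) =
      LinearMap.mul' k H (TensorProduct.map f g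
        ((TensorProduct.tensorTensorTensorComm k H H H H)
          ((Coalgebra.comul (R := k) a) ⊗ₜ (Coalgebra.comul (R := k) b)))) := rfl

noncomputable def convUnit : H ⊗[k] H →ₗ[k] H :=
  (Algebra.linearMap k H) ∘ₗ LinearMap.mul' k k ∘ₗ
    TensorProduct.map (Coalgebra.counit (R := k)) (Coalgebra.counit (R := k))

lemma convUnit_apply (a b : H) :
    convUnit k H (a ⊗ₜ b) = (Coalgebra.counit (R := k) a * Coalgebra.counit (R := k) b) • 1 := by
  simp [convUnit, Algebra.smul_def]

lemma unit_left_key (f : H ⊗[k] H →ₗ[k] H) :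
    (LinearMap.mul' k H ∘ₗ TensorProduct.map (convUnit k H) f ∘ₗ
      (TensorProduct.tensorTensorTensorComm k H H H H).toLinearMap) =
    f ∘ₗ TensorProduct.map
      ((TensorProduct.lid k H).toLinearMap ∘ₗ (Coalgebra.counit (R := k)).rTensor H)
      ((TensorProduct.lid k H).toLinearMap ∘ₗ (Coalgebra.counit (R := k)).rTensor H) := by
  ext a₁ a₂ b₁ b₂
  simp [convUnit_apply, smul_tmul_smul, smul_mul_assoc, ← smul_tmul', map_smul, smul_smul, mul_comm]

lemma conv_unit_left (f : H ⊗[k] H →ₗ[k] H) : conv k H (convUnit k H) f = f := by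
  apply TensorProduct.ext'
  intro a b
  rw [conv_apply]
  have := LinearMap.congr_fun (unit_left_key k H f)
    ((Coalgebra.comul (R := k) a) ⊗ₜ (Coalgebra.comul (R := k) b))
  simp only [LinearMap.comp_apply, LinearEquiv.coe_coe, map_tmul] at this
  rw [this]
  simp [Coalgebra.rTensor_counit_comul (R := k)]

lemma unit_right_key (f : H ⊗[k] H →ₗ[k] H) :
    (LinearMap.mul' k H ∘ₗ TensorProduct.map f (convUnit k H) ∘ₗ
      (TensorProduct.tensorTensorTensorComm k H H H H).toLinearMap) =
    f ∘ₗ TensorProduct.map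
      ((TensorProduct.rid k H).toLinearMap ∘ₗ (Coalgebra.counit (R := k)).lTensor H)
      ((TensorProduct.rid k H).toLinearMap ∘ₗ (Coalgebra.counit (R := k)).lTensor H) := by
  ext a₁ a₂ b₁ b₂
  simp [convUnit_apply, smul_tmul_smul, mul_smul_comm, ← smul_tmul', map_smul, smul_smul,
    mul_comm]

lemma conv_unit_right (f : H ⊗[k] H →ₗ[k] H) : conv k H f (convUnit k H) = f := by
  apply TensorProduct.ext'
  intro a b
  rw [conv_apply]
  have := LinearMap.congr_fun (unit_right_key k H f)
    ((Coalgebra.comul (R := k) a) ⊗ₜ (Coalgebra.comul (R := k) b))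
  simp only [LinearMap.comp_apply, LinearEquiv.coe_coe, map_tmul] at this
  rw [this]
  simp [Coalgebra.lTensor_counit_comul (R := k)]

/-- `cfg f g (u ⊗ v) = Σ f(u₁ ⊗ v₁) g(u₂ ⊗ v₂)`. -/
noncomputable def cfg (f g : H ⊗[k] H →ₗ[k] H) : (H ⊗[k] H) ⊗[k] (H ⊗[k] H) →ₗ[k] H :=
  LinearMap.mul' k H ∘ₗ TensorProduct.map f g ∘ₗ
    (TensorProduct.tensorTensorTensorComm k H H H H).toLinearMap

lemma conv_eq_cfg (f g : H ⊗[k] H →ₗ[k] H) :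
    conv k H f g = cfg k H f g ∘ₗ
      TensorProduct.map (Coalgebra.comul (R := k)) (Coalgebra.comul (R := k)) := rfl

noncomputable def WL (f g h : H ⊗[k] H →ₗ[k] H) :
    ((H ⊗[k] H) ⊗[k] H) ⊗[k] ((H ⊗[k] H) ⊗[k] H) →ₗ[k] H :=
  LinearMap.mul' k H ∘ₗ TensorProduct.map (cfg k H f g) h ∘ₗ
    (TensorProduct.tensorTensorTensorComm k (H ⊗[k] H) H (H ⊗[k] H) H).toLinearMap

noncomputable def WR (f g h : H ⊗[k] H →ₗ[k] H) :
    (H ⊗[k] (H ⊗[k] H)) ⊗[k] (H ⊗[k] (H ⊗[k] H)) →ₗ[k] H :=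
  LinearMap.mul' k H ∘ₗ TensorProduct.map f (cfg k H g h) ∘ₗ
    (TensorProduct.tensorTensorTensorComm k H (H ⊗[k] H) H (H ⊗[k] H)).toLinearMap

lemma claimA (f g h : H ⊗[k] H →ₗ[k] H) :
    cfg k H (conv k H f g) h =
      WL k H f g h ∘ₗ TensorProduct.map
        ((Coalgebra.comul (R := k)).rTensor H) ((Coalgebra.comul (R := k)).rTensor H) := by
  ext a₁ a₂ b₁ b₂
  simp [cfg, WL, conv_apply]

lemma claimB (f g h : H ⊗[k] H →ₗ[k] H) :
    cfg k H f (conv k H g h) =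
      WR k H f g h ∘ₗ TensorProduct.map
        ((Coalgebra.comul (R := k)).lTensor H) ((Coalgebra.comul (R := k)).lTensor H) := by
  ext a₁ a₂ b₁ b₂
  simp [cfg, WR, conv_apply]

lemma claimC (f g h : H ⊗[k] H →ₗ[k] H) :
    WL k H f g h = WR k H f g h ∘ₗ TensorProduct.map
      (TensorProduct.assoc k H H H).toLinearMap (TensorProduct.assoc k H H H).toLinearMap := by
  ext p q r s t u
  simp [WL, WR, cfg, mul_assoc]

lemma conv_assoc (f g h : H ⊗[k] H →ₗ[k] H) :
    conv k H (conv k H f g) h = conv k H f (conv k H g h) := by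
  have hco : ((TensorProduct.assoc k H H H : _ ≃ₗ[k] _) : _ →ₗ[k] _) ∘ₗ
        (Coalgebra.comul (R := k)).rTensor H ∘ₗ (Coalgebra.comul (R := k) : H →ₗ[k] _) =
      (Coalgebra.comul (R := k)).lTensor H ∘ₗ (Coalgebra.comul (R := k) : H →ₗ[k] _) :=
    Coalgebra.coassoc
  rw [conv_eq_cfg k H (conv k H f g) h, conv_eq_cfg k H f (conv k H g h), claimA, claimB, claimC]
  simp only [LinearMap.comp_assoc, ← TensorProduct.map_comp, hco]

/-- `γ ∘ μ` is a left convolution inverse of `μ`. -/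
lemma conv_antimul_mul :
    conv k H ((HopfAlgebra.antipode (R := k)) ∘ₗ LinearMap.mul' k H) (LinearMap.mul' k H) =
      convUnit k H := by
  have key : LinearMap.mul' k H ∘ₗ
      TensorProduct.map ((HopfAlgebra.antipode (R := k)) ∘ₗ LinearMap.mul' k H)
        (LinearMap.mul' k H) ∘ₗ
      (TensorProduct.tensorTensorTensorComm k H H H H).toLinearMap =
      (LinearMap.mul' k H ∘ₗ (HopfAlgebra.antipode (R := k)).rTensor H) ∘ₗ
        LinearMap.mul' k (H ⊗[k] H) := by
    ext a₁ a₂ b₁ b₂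
    simp [Algebra.TensorProduct.tmul_mul_tmul]
  apply TensorProduct.ext'
  intro a b
  rw [conv_apply]
  have := LinearMap.congr_fun key ((Coalgebra.comul (R := k) a) ⊗ₜ (Coalgebra.comul (R := k) b))
  simp only [LinearMap.comp_apply, LinearEquiv.coe_coe] at this
  rw [this]
  have : LinearMap.mul' k (H ⊗[k] H) ((Coalgebra.comul (R := k) a) ⊗ₜ Coalgebra.comul (R := k) b)
      = Coalgebra.comul (R := k) (a * b) := by
    simp [LinearMap.mul'_apply, Bialgebra.comul_mul]
  rw [this, HopfAlgebra.mul_antipode_rTensor_comul_apply, convUnit_apply]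
  simp [Algebra.smul_def]

/-- `μ ∘ (γ ⊗ γ) ∘ comm` is a right convolution inverse of `μ`. -/
lemma conv_mul_antiswap :
    conv k H (LinearMap.mul' k H)
      (LinearMap.mul' k H ∘ₗ TensorProduct.map (HopfAlgebra.antipode (R := k))
        (HopfAlgebra.antipode (R := k)) ∘ₗ (TensorProduct.comm k H H).toLinearMap) =
      convUnit k H := by
  set γ : H →ₗ[k] H := HopfAlgebra.antipode (R := k) with hγdef
  set S : (H ⊗[k] H) ⊗[k] H →ₗ[k] H :=
    LinearMap.mul' k H ∘ₗ
      (TensorProduct.map LinearMap.id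
        (LinearMap.mul' k H ∘ₗ (TensorProduct.comm k H H).toLinearMap ∘ₗ γ.rTensor H)) ∘ₗ
      (TensorProduct.assoc k H H H).toLinearMap with hSdef
  have key : LinearMap.mul' k H ∘ₗ
      TensorProduct.map (LinearMap.mul' k H)
        (LinearMap.mul' k H ∘ₗ TensorProduct.map γ γ ∘ₗ (TensorProduct.comm k H H).toLinearMap) ∘ₗ
      (TensorProduct.tensorTensorTensorComm k H H H H).toLinearMap =
      S ∘ₗ TensorProduct.map LinearMap.id (LinearMap.mul' k H ∘ₗ γ.lTensor H) := by
    ext a₁ a₂ b₁ b₂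
    simp [hSdef, mul_assoc]
  have Salg : ∀ (u : H ⊗[k] H) (r : k),
      S (u ⊗ₜ (algebraMap k H r)) = r • LinearMap.mul' k H (γ.lTensor H u) := by
    intro u r
    have : S ∘ₗ (TensorProduct.mk k (H ⊗[k] H) H).flip (algebraMap k H r) =
        r • (LinearMap.mul' k H ∘ₗ γ.lTensor H) := by
      ext a₁ a₂
      simp [hSdef, Algebra.commutes, Algebra.smul_def, mul_assoc]
    exact LinearMap.congr_fun this u
  apply TensorProduct.ext'
  intro a b
  rw [conv_apply]
  have := LinearMap.congr_fun key ((Coalgebra.comul (R := k) a) ⊗ₜ (Coalgebra.comul (R := k) b))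
  simp only [LinearMap.comp_apply, TensorProduct.map_tmul, LinearMap.id_apply,
    LinearEquiv.coe_coe] at this
  rw [this, HopfAlgebra.mul_antipode_lTensor_comul_apply, Salg,
    HopfAlgebra.mul_antipode_lTensor_comul_apply, convUnit_apply]
  rw [Algebra.smul_def, Algebra.smul_def, mul_one, ← map_mul, mul_comm]

lemma antipode_mul' (a b : H) :
    HopfAlgebra.antipode (R := k) (a * b) =
      HopfAlgebra.antipode (R := k) b * HopfAlgebra.antipode (R := k) a := by
  set γ : H →ₗ[k] H := HopfAlgebra.antipode (R := k) with hγdef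
  have main : γ ∘ₗ LinearMap.mul' k H =
      LinearMap.mul' k H ∘ₗ TensorProduct.map γ γ ∘ₗ (TensorProduct.comm k H H).toLinearMap := by
    calc γ ∘ₗ LinearMap.mul' k H
        = conv k H (γ ∘ₗ LinearMap.mul' k H) (convUnit k H) := (conv_unit_right k H _).symm
      _ = conv k H (γ ∘ₗ LinearMap.mul' k H)
            (conv k H (LinearMap.mul' k H)
              (LinearMap.mul' k H ∘ₗ TensorProduct.map γ γ ∘ₗ
                (TensorProduct.comm k H H).toLinearMap)) := by rw [conv_mul_antiswap]
      _ = conv k H (conv k H (γ ∘ₗ LinearMap.mul' k H) (LinearMap.mul' k H))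
            (LinearMap.mul' k H ∘ₗ TensorProduct.map γ γ ∘ₗ
              (TensorProduct.comm k H H).toLinearMap) := (conv_assoc k H _ _ _).symm
      _ = conv k H (convUnit k H)
            (LinearMap.mul' k H ∘ₗ TensorProduct.map γ γ ∘ₗ
              (TensorProduct.comm k H H).toLinearMap) := by rw [conv_antimul_mul]
      _ = _ := conv_unit_left k H _
  have := LinearMap.congr_fun main (a ⊗ₜ b)
  simpa using this

lemma antipode_one' : HopfAlgebra.antipode (R := k) (1 : H) = 1 := by
  have := HopfAlgebra.mul_antipode_rTensor_comul_apply (R := k) (1 : H)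
  simp only [Bialgebra.comul_one, Bialgebra.counit_one, map_one] at this
  rw [Algebra.TensorProduct.one_def] at this
  simpa using this



lemma anti_mul (a b : H) : anti k H (a * b) = anti k H b * anti k H a := antipode_mul' k H a b

lemma anti_one : anti k H (1 : H) = 1 := antipode_one' k H

/-- `assoc` is multiplicative. -/
lemma assoc_mul (x y : (H ⊗[k] H) ⊗[k] H) :
    TensorProduct.assoc k H H H (x * y) =
      TensorProduct.assoc k H H H x * TensorProduct.assoc k H H H y :=
  map_mul (Algebra.TensorProduct.assoc k k k H H H) x y

lemma assoc_one : TensorProduct.assoc k H H H (1 : (H ⊗[k] H) ⊗[k] H) = 1 :=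
  map_one (Algebra.TensorProduct.assoc k k k H H H)

/-- `id ⊗ Δ` is multiplicative. -/
lemma mapIdComul_mul (u v : H ⊗[k] H) :
    TensorProduct.map LinearMap.id (comulL k H) (u * v) =
      TensorProduct.map LinearMap.id (comulL k H) u *
        TensorProduct.map LinearMap.id (comulL k H) v :=
  map_mul (Algebra.TensorProduct.map (AlgHom.id k H) (Bialgebra.comulAlgHom k H)) u v

lemma mapIdComul_one :
    TensorProduct.map LinearMap.id (comulL k H) (1 : H ⊗[k] H) = 1 :=
  map_one (Algebra.TensorProduct.map (AlgHom.id k H) (Bialgebra.comulAlgHom k H))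

/-- `rid ∘ (id ⊗ ε)` is multiplicative. -/
lemma ridCounit_mul_map :
    (TensorProduct.rid k H).toLinearMap ∘ₗ TensorProduct.map LinearMap.id (counitL k H) ∘ₗ
        LinearMap.mul' k (H ⊗[k] H) =
      LinearMap.mul' k H ∘ₗ TensorProduct.map
        ((TensorProduct.rid k H).toLinearMap ∘ₗ TensorProduct.map LinearMap.id (counitL k H))
        ((TensorProduct.rid k H).toLinearMap ∘ₗ TensorProduct.map LinearMap.id (counitL k H)) := by
  ext a b c d
  simp [counitL, Algebra.TensorProduct.tmul_mul_tmul, smul_smul, smul_mul_smul_comm, mul_comm]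

lemma ridCounit_mul (u v : H ⊗[k] H) :
    TensorProduct.rid k H (TensorProduct.map LinearMap.id (counitL k H) (u * v)) =
      TensorProduct.rid k H (TensorProduct.map LinearMap.id (counitL k H) u) *
        TensorProduct.rid k H (TensorProduct.map LinearMap.id (counitL k H) v) := by
  have := LinearMap.congr_fun (ridCounit_mul_map k H) (u ⊗ₜ v)
  simpa using this

lemma ridCounit_one :
    TensorProduct.rid k H (TensorProduct.map LinearMap.id (counitL k H) (1 : H ⊗[k] H)) = 1 := by
  rw [Algebra.TensorProduct.one_def]
  simp [counitL]

/-- Multiplying on the right by a pure tensor, then antipode-collapsing. -/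
lemma mul'_anti_mulRight (c d : H) :
    (LinearMap.mul' k H) ∘ₗ TensorProduct.map (anti k H) LinearMap.id ∘ₗ
        LinearMap.mulRight k (c ⊗ₜ[k] d) =
      LinearMap.mulRight k d ∘ₗ LinearMap.mulLeft k (anti k H c) ∘ₗ
        LinearMap.mul' k H ∘ₗ TensorProduct.map (anti k H) LinearMap.id := by
  ext a b
  simp [Algebra.TensorProduct.tmul_mul_tmul, anti_mul, mul_assoc]

/-- `Σ γ(g⁽¹⁾ c) g⁽²⁾ d = ε(g) • (γ(c) d)`. -/
lemma collapse (g c d : H) :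
    LinearMap.mul' k H (TensorProduct.map (anti k H) LinearMap.id
        (comulL k H g * (c ⊗ₜ[k] d))) =
      counitL k H g • (anti k H c * d) := by
  have h1 := LinearMap.congr_fun (mul'_anti_mulRight k H c d) (comulL k H g)
  simp only [LinearMap.comp_apply, LinearMap.mulRight_apply, LinearMap.mulLeft_apply] at h1
  rw [h1]
  have h2 : LinearMap.mul' k H (TensorProduct.map (anti k H) LinearMap.id (comulL k H g)) =
      algebraMap k H (counitL k H g) := by
    have := HopfAlgebra.mul_antipode_rTensor_comul_apply (R := k) g
    exact this
  rw [h2, ← Algebra.commutes ((counitL k H) g) (anti k H c), Algebra.smul_def, mul_assoc]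

/-- variant of `collapse` with an extra right factor `ζ` inside the antipode. -/
lemma collapse_z (ζ' g c d : H) :
    LinearMap.mul' k H (TensorProduct.map ((anti k H) ∘ₗ LinearMap.mulRight k ζ') LinearMap.id
        (comulL k H g * (c ⊗ₜ[k] d))) =
      counitL k H g • (anti k H (c * ζ') * d) := by
  have key : TensorProduct.map ((anti k H) ∘ₗ LinearMap.mulRight k ζ') LinearMap.id ∘ₗ
      LinearMap.mulRight k (c ⊗ₜ[k] d) =
      TensorProduct.map (anti k H) LinearMap.id ∘ₗ LinearMap.mulRight k ((c * ζ') ⊗ₜ[k] d) := by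
    ext p q
    simp [Algebra.TensorProduct.tmul_mul_tmul, mul_assoc]
  have := LinearMap.congr_fun key (comulL k H g)
  simp only [LinearMap.comp_apply, LinearMap.mulRight_apply] at this
  rw [this, collapse]

/-- Step B: `(id ⊗ (μ ∘ (γ(·ζ) ⊗ id))) ((id⊗Δ)(u) · (1 ⊗ v)) = (id⊗ε)(u) ⊗ Σ γ(v₁ζ) v₂`. -/
lemma stepB_map (ζ' : H) :
    TensorProduct.map LinearMap.id
        (LinearMap.mul' k H ∘ₗ TensorProduct.map ((anti k H) ∘ₗ LinearMap.mulRight k ζ')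
          LinearMap.id) ∘ₗ
      LinearMap.mul' k (H ⊗[k] (H ⊗[k] H)) ∘ₗ
      TensorProduct.map (TensorProduct.map LinearMap.id (comulL k H))
        (TensorProduct.mk k H (H ⊗[k] H) 1) =
    TensorProduct.map
      ((TensorProduct.rid k H).toLinearMap ∘ₗ TensorProduct.map LinearMap.id (counitL k H))
      (LinearMap.mul' k H ∘ₗ TensorProduct.map ((anti k H) ∘ₗ LinearMap.mulRight k ζ')
        LinearMap.id) := by
  ext a b c d
  simp only [TensorProduct.AlgebraTensorModule.curry_apply, TensorProduct.curry_apply,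
    LinearMap.coe_restrictScalars, LinearMap.comp_apply, TensorProduct.map_tmul,
    LinearMap.id_apply, TensorProduct.mk_apply, LinearMap.mul'_apply,
    Algebra.TensorProduct.tmul_mul_tmul, mul_one, one_mul,
    LinearEquiv.coe_coe, TensorProduct.rid_tmul]
  rw [collapse_z]
  simp only [TensorProduct.tmul_smul, TensorProduct.smul_tmul', LinearMap.mulRight_apply]

/-- Step C: pulling `γ(ζ)` out. -/
lemma stepC_map (ζ' : H) :
    LinearMap.mul' k H ∘ₗ TensorProduct.map ((anti k H) ∘ₗ LinearMap.mulRight k ζ')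
        LinearMap.id =
      LinearMap.mulLeft k (anti k H ζ') ∘ₗ LinearMap.mul' k H ∘ₗ
        TensorProduct.map (anti k H) LinearMap.id := by
  ext a b
  simp [anti_mul, mul_assoc]

/-- `γ(ζ) = Σ F̄₁ γ(F̄₂)`. -/
lemma anti_zeta_map (γinv : H →ₗ[k] H) (hγ2 : ∀ h : H, anti k H (γinv h) = h) :
    (anti k H) ∘ₗ LinearMap.mul' k H ∘ₗ TensorProduct.map LinearMap.id γinv ∘ₗ
        (TensorProduct.comm k H H).toLinearMap =
      LinearMap.mul' k H ∘ₗ TensorProduct.map LinearMap.id (anti k H) := by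
  ext a b
  simp [anti_mul, hγ2]

/-- `Q(a ⊗ (b ⊗ c)) = a γ(b) c`. -/
noncomputable def Qmap : H ⊗[k] (H ⊗[k] H) →ₗ[k] H :=
  LinearMap.mul' k H ∘ₗ TensorProduct.map LinearMap.id
    (LinearMap.mul' k H ∘ₗ TensorProduct.map (anti k H) LinearMap.id)

/-- `Q((1 ⊗ u) · assoc(v ⊗ 1)) = (Σ v₁ γ(v₂)) (Σ γ(u₁) u₂)`. -/
lemma d3a_map :
    Qmap k H ∘ₗ LinearMap.mul' k (H ⊗[k] (H ⊗[k] H)) ∘ₗ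
        TensorProduct.map (TensorProduct.mk k H (H ⊗[k] H) 1)
          ((TensorProduct.assoc k H H H).toLinearMap ∘ₗ
            (TensorProduct.mk k (H ⊗[k] H) H).flip 1) =
      LinearMap.mul' k H ∘ₗ TensorProduct.map
          (LinearMap.mul' k H ∘ₗ TensorProduct.map LinearMap.id (anti k H))
          (LinearMap.mul' k H ∘ₗ TensorProduct.map (anti k H) LinearMap.id) ∘ₗ
        (TensorProduct.comm k (H ⊗[k] H) (H ⊗[k] H)).toLinearMap := by
  ext a b c d
  simp [Qmap, Algebra.TensorProduct.tmul_mul_tmul, anti_mul, mul_assoc]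

/-- `Q((x̄ ⊗ Δȳ) · assoc(w ⊗ y)) = ε(ȳ) • (x̄ · (Σ w₁ γ(w₂)) · y)`. -/
lemma d3b1 (x' y' y : H) (w : H ⊗[k] H) :
    Qmap k H ((x' ⊗ₜ[k] comulL k H y') *
        (TensorProduct.assoc k H H H (w ⊗ₜ[k] y))) =
      counitL k H y' • (x' * LinearMap.mul' k H
        (TensorProduct.map LinearMap.id (anti k H) w) * y) := by
  have key : Qmap k H ∘ₗ LinearMap.mulLeft k (x' ⊗ₜ[k] comulL k H y') ∘ₗ
      (TensorProduct.assoc k H H H).toLinearMap ∘ₗ (TensorProduct.mk k (H ⊗[k] H) H).flip y =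
      counitL k H y' • (LinearMap.mulRight k y ∘ₗ LinearMap.mulLeft k x' ∘ₗ
        LinearMap.mul' k H ∘ₗ TensorProduct.map LinearMap.id (anti k H)) := by
    ext p q
    simp only [TensorProduct.AlgebraTensorModule.curry_apply, TensorProduct.curry_apply,
      LinearMap.coe_restrictScalars, LinearMap.comp_apply, LinearMap.flip_apply,
      TensorProduct.mk_apply, LinearEquiv.coe_coe, TensorProduct.assoc_tmul,
      LinearMap.mulLeft_apply, Algebra.TensorProduct.tmul_mul_tmul, LinearMap.smul_apply,
      LinearMap.mulRight_apply, TensorProduct.map_tmul, LinearMap.id_apply,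
      LinearMap.mul'_apply]
    have hq : ∀ (x : H) (u : H ⊗[k] H), Qmap k H (x ⊗ₜ u) =
        x * LinearMap.mul' k H (TensorProduct.map (anti k H) LinearMap.id u) := by
      intro x u; simp [Qmap]
    rw [hq, collapse, mul_smul_comm]
    simp only [mul_assoc]
  have := LinearMap.congr_fun key w
  simpa using this

/-- `Q((id⊗Δ)(u) · assoc((Δ⊗id)(v))) = (id⊗ε)(u) · (ε⊗id)(v)`. -/
lemma d3b_map :
    Qmap k H ∘ₗ LinearMap.mul' k (H ⊗[k] (H ⊗[k] H)) ∘ₗ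
        TensorProduct.map (TensorProduct.map LinearMap.id (comulL k H))
          ((TensorProduct.assoc k H H H).toLinearMap ∘ₗ
            TensorProduct.map (comulL k H) LinearMap.id) =
      LinearMap.mul' k H ∘ₗ TensorProduct.map
        ((TensorProduct.rid k H).toLinearMap ∘ₗ TensorProduct.map LinearMap.id (counitL k H))
        ((TensorProduct.lid k H).toLinearMap ∘ₗ TensorProduct.map (counitL k H) LinearMap.id) := by
  ext a b c d
  simp only [TensorProduct.AlgebraTensorModule.curry_apply, TensorProduct.curry_apply,
    LinearMap.coe_restrictScalars, LinearMap.comp_apply, TensorProduct.map_tmul,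
    LinearMap.id_apply, LinearMap.mul'_apply, LinearEquiv.coe_coe,
    TensorProduct.rid_tmul, TensorProduct.lid_tmul]
  rw [d3b1]
  have hc : LinearMap.mul' k H (TensorProduct.map LinearMap.id (anti k H) (comulL k H c)) =
      algebraMap k H (counitL k H c) :=
    HopfAlgebra.mul_antipode_lTensor_comul_apply (R := k) c
  rw [hc, mul_assoc, ← Algebra.smul_def, mul_smul_comm, smul_mul_assoc, mul_smul_comm]

/-- `γ(ζ) · ϑ = 1`. -/
lemma key_zeta_theta (F Finv : H ⊗[k] H) (γinv : H →ₗ[k] H)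
    (hγ2 : ∀ h : H, anti k H (γinv h) = h)
    (hFF : F * Finv = 1) (hFiF : Finv * F = 1)
    (hcoc : (TensorProduct.assoc k H H H)
        ((TensorProduct.map (comulL k H) LinearMap.id F) * (F ⊗ₜ 1))
      = (TensorProduct.map LinearMap.id (comulL k H) F) * ((1 : H) ⊗ₜ F))
    (hεl : (TensorProduct.lid k H) (TensorProduct.map (counitL k H) LinearMap.id F) = 1)
    (hεr : (TensorProduct.rid k H) (TensorProduct.map LinearMap.id (counitL k H) F) = 1) :
    anti k H (LinearMap.mul' k H (TensorProduct.map LinearMap.id γinv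
        ((TensorProduct.comm k H H) Finv))) *
      LinearMap.mul' k H (TensorProduct.map (anti k H) LinearMap.id F) = 1 := by
  -- γ(ζ) = Σ F̄₁ γ(F̄₂)
  have hA : anti k H (LinearMap.mul' k H (TensorProduct.map LinearMap.id γinv
      ((TensorProduct.comm k H H) Finv))) =
      LinearMap.mul' k H (TensorProduct.map LinearMap.id (anti k H) Finv) := by
    have := LinearMap.congr_fun (anti_zeta_map k H γinv hγ2) Finv
    simpa using this
  -- the rearranged cocycle identity
  have e1 : (TensorProduct.map LinearMap.id (comulL k H) Finv) *
      (TensorProduct.assoc k H H H (TensorProduct.map (comulL k H) LinearMap.id F)) *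
      (TensorProduct.assoc k H H H (F ⊗ₜ 1)) = (1 : H) ⊗ₜ F := by
    rw [mul_assoc, ← assoc_mul, hcoc, ← mul_assoc, ← mapIdComul_mul, hFiF, mapIdComul_one,
      one_mul]
  have e2 : (TensorProduct.assoc k H H H (F ⊗ₜ (1 : H))) *
      (TensorProduct.assoc k H H H (Finv ⊗ₜ (1 : H))) = 1 := by
    have h1 : ((1 : H ⊗[k] H) ⊗ₜ[k] (1 : H)) = (1 : (H ⊗[k] H) ⊗[k] H) :=
      (Algebra.TensorProduct.one_def).symm
    rw [← assoc_mul, Algebra.TensorProduct.tmul_mul_tmul, hFF, mul_one]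
    try rw [h1, assoc_one]
  have e3 : (TensorProduct.map LinearMap.id (comulL k H) Finv) *
      (TensorProduct.assoc k H H H (TensorProduct.map (comulL k H) LinearMap.id F)) =
      ((1 : H) ⊗ₜ F) * (TensorProduct.assoc k H H H (Finv ⊗ₜ (1 : H))) := by
    have := congrArg (· * (TensorProduct.assoc k H H H (Finv ⊗ₜ (1 : H)))) e1
    simpa [mul_assoc, e2] using this
  -- apply Q to both sides
  have q1 := LinearMap.congr_fun (d3a_map k H) (F ⊗ₜ Finv)
  simp only [LinearMap.comp_apply, TensorProduct.map_tmul, LinearMap.mul'_apply,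
    LinearEquiv.coe_coe, TensorProduct.comm_tmul, TensorProduct.mk_apply,
    LinearMap.flip_apply] at q1
  have q2 := LinearMap.congr_fun (d3b_map k H) (Finv ⊗ₜ F)
  simp only [LinearMap.comp_apply, TensorProduct.map_tmul, LinearMap.mul'_apply,
    LinearEquiv.coe_coe] at q2
  rw [hA, ← q1, ← e3, q2]
  -- (id ⊗ ε)(Finv) = 1
  have hinv : TensorProduct.rid k H (TensorProduct.map LinearMap.id (counitL k H) Finv) = 1 := by
    have := ridCounit_mul k H F Finv
    rw [hFF, ridCounit_one, hεr, one_mul] at this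
    exact this.symm
  rw [hεl, hinv, mul_one]


section EndSide

variable {k H}

lemma sandwich_tmul {E : Type*} [Ring E] [Algebra k E]
    (α β : H →ₗ[k] E) (x y : H) (Z : E) :
    sandwich k H α β (x ⊗ₜ y) Z = α x * (Z * β y) := by
  simp [sandwich, bcomp, mul_assoc]

end EndSide

variable {k H A} in
/-- The trilinear "left-hand side" map of Step A:
`(w ⊗ v) ⊗ y ↦ (sandwich act actγ w) ((sandwich act actγζ v) X) ((act y) a)`. -/
noncomputable def leftMap (act : H →ₗ[k] Module.End k A) (ζ' : H) (X : Module.End k A) (a : A) :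
    ((H ⊗[k] H) ⊗[k] (H ⊗[k] H)) ⊗[k] H →ₗ[k] A :=
  TensorProduct.lift
    (((LinearMap.llcomp k H A A).flip (act.flip a)) ∘ₗ
      TensorProduct.lift
        (LinearMap.mk₂ k
          (fun w v => sandwich k H act (act ∘ₗ anti k H) w
            ((sandwich k H act (act ∘ₗ (anti k H) ∘ₗ (LinearMap.mulRight k ζ')) v) X))
          (fun w w' v => by simp)
          (fun s w v => by simp)
          (fun w v v' => by simp)
          (fun s w v => by simp)))

variable {k H A} in
/-- pure-tensor evaluation of `leftMap`. -/
lemma leftMap_tmul (act : H →ₗ[k] Module.End k A) (ζ' : H) (X : Module.End k A) (a : A)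
    (w v : H ⊗[k] H) (y : H) :
    leftMap act ζ' X a ((w ⊗ₜ v) ⊗ₜ y) =
      (sandwich k H act (act ∘ₗ anti k H) w
        ((sandwich k H act (act ∘ₗ (anti k H) ∘ₗ (LinearMap.mulRight k ζ')) v) X))
        (act y a) := by
  simp [leftMap]

variable {k H A} in
/-- The trilinear "right-hand side" map of Step A. -/
noncomputable def rightMap (act : H →ₗ[k] Module.End k A) (ζ' : H) (X : Module.End k A) (a : A) :
    ((H ⊗[k] H) ⊗[k] (H ⊗[k] H)) ⊗[k] H →ₗ[k] A :=
  (LinearMap.applyₗ a) ∘ₗ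
    ((sandwich k H (E := Module.End k A) act act).flip X) ∘ₗ
    (TensorProduct.map LinearMap.id
      (LinearMap.mul' k H ∘ₗ TensorProduct.map ((anti k H) ∘ₗ LinearMap.mulRight k ζ')
        LinearMap.id)) ∘ₗ
    (TensorProduct.assoc k H H H).toLinearMap ∘ₗ
    (LinearMap.mul' k (H ⊗[k] H)).rTensor H

variable {k H A} in
lemma stepA_map (act : H →ₗ[k] Module.End k A) (ζ' : H) (X : Module.End k A) (a : A)
    (hmul : ∀ g h : H, act (g * h) = act g * act h) :
    leftMap act ζ' X a = rightMap act ζ' X a := by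
  ext w₁ w₂ v₁ v₂ y
  simp only [TensorProduct.AlgebraTensorModule.curry_apply, TensorProduct.curry_apply,
    LinearMap.coe_restrictScalars, leftMap_tmul, rightMap, LinearMap.comp_apply,
    LinearMap.rTensor_tmul, LinearMap.mul'_apply, Algebra.TensorProduct.tmul_mul_tmul,
    LinearEquiv.coe_coe, TensorProduct.assoc_tmul, TensorProduct.map_tmul,
    LinearMap.id_apply, LinearMap.flip_apply,
    sandwich_tmul, LinearMap.mulRight_apply]
  simp only [hmul, anti_mul, mul_assoc, LinearMap.applyₗ_apply_apply, Module.End.mul_apply]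


/-- For `X ∈ End_k(A)`, let `φ⁻¹(X) = Σ ρ(F₁) ∘ X ∘ ρ(γ(F₂ζ))` and let the
twisted action of `End_k(A)` on `A` be `X ∗ a = Σ (F₁.X)(F₂•a)`.
Then `φ⁻¹(X) ∗ a = X(a)` for all `X` and `a`. -/
theorem twisted_action_compensates_phiInv
    (act : H →ₗ[k] Module.End k A)
    (F Finv : H ⊗[k] H) (hF : IsCocycle k H F Finv)
    (γinv : H →ₗ[k] H)
    (hγ1 : ∀ h : H, γinv (anti k H h) = h) (hγ2 : ∀ h : H, anti k H (γinv h) = h)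
    (hact : IsModAlg k H A act) :
    ∀ (X : Module.End k A) (a : A),
      TensorProduct.lift
        ((((LinearMap.llcomp k H A A) ∘ₗ
            ((dotAct k H A act).flip
              ((sandwich k H (E := Module.End k A) act
                  (act ∘ₗ (anti k H) ∘ₗ (LinearMap.mulRight k (zeta k H γinv Finv))) F)
                X))).flip)
          (act.flip a)) F
      = X a := by
  obtain ⟨hFF, hFiF, hcoc, hεl, hεr⟩ := hF
  obtain ⟨hone, hmul, -, -⟩ := hact
  intro X a
  set ζ' : H := zeta k H γinv Finv with hζ
  set σ : H ⊗[k] H →ₗ[k] ((H ⊗[k] H) ⊗[k] (H ⊗[k] H)) ⊗[k] H :=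
    ((((TensorProduct.mk k (H ⊗[k] H) (H ⊗[k] H)).flip F).rTensor H) ∘ₗ
      ((comulL k H).rTensor H)) with hσ
  -- Step 0: rewrite the LHS via `leftMap`
  have e0 : TensorProduct.lift
      ((((LinearMap.llcomp k H A A) ∘ₗ
          ((dotAct k H A act).flip
            ((sandwich k H (E := Module.End k A) act
                (act ∘ₗ (anti k H) ∘ₗ (LinearMap.mulRight k (zeta k H γinv Finv))) F)
              X))).flip)
        (act.flip a)) = leftMap act ζ' X a ∘ₗ σ := by
    apply TensorProduct.ext'
    intro x y
    simp only [TensorProduct.lift.tmul, LinearMap.flip_apply, LinearMap.comp_apply,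
      LinearMap.llcomp_apply, hσ, LinearMap.rTensor_tmul, TensorProduct.mk_apply,
      leftMap_tmul, dotAct, ← hζ]
  rw [e0]
  rw [LinearMap.comp_apply, stepA_map act ζ' X a hmul]
  -- Step 1: compute the argument of the sandwich
  have r2 : (LinearMap.mul' k (H ⊗[k] H)).rTensor H (σ F) =
      (TensorProduct.map (comulL k H) LinearMap.id F) * (F ⊗ₜ 1) := by
    have hr : ((LinearMap.mul' k (H ⊗[k] H)).rTensor H) ∘ₗ σ =
        (LinearMap.mulRight k (F ⊗ₜ (1 : H))) ∘ₗ
          (TensorProduct.map (comulL k H) LinearMap.id) := by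
      apply TensorProduct.ext'
      intro x y
      simp [hσ, Algebra.TensorProduct.tmul_mul_tmul]
    have := LinearMap.congr_fun hr F
    simpa using this
  have r3 := LinearMap.congr_fun (stepB_map k H ζ') (F ⊗ₜ F)
  simp only [LinearMap.comp_apply, TensorProduct.map_tmul, TensorProduct.mk_apply,
    LinearMap.mul'_apply, LinearMap.id_apply, LinearEquiv.coe_coe] at r3
  have r4 : LinearMap.mul' k H (TensorProduct.map ((anti k H) ∘ₗ LinearMap.mulRight k ζ')
      LinearMap.id F) = 1 := by
    have hc := LinearMap.congr_fun (stepC_map k H ζ') F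
    simp only [LinearMap.comp_apply, LinearMap.mulLeft_apply] at hc
    rw [hc, hζ]
    exact key_zeta_theta k H F Finv γinv hγ2 hFF hFiF hcoc hεl hεr
  rw [rightMap, LinearMap.comp_apply, LinearMap.comp_apply, LinearMap.comp_apply,
    LinearMap.comp_apply, r2, LinearEquiv.coe_coe, hcoc, r3, hεr, r4]
  simp [sandwich_tmul, hone]


end
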